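/- arXiv:2602.04422 — 2 statements merged into one kernel-verified Lean document; each statement's English description precedes it below -/
import Mathlib

section
/- Let ∇_ε f = (∇_H f, ε^{-2} ∂_z f)^T be the scaled gradient and (u, u^♯)_{L²_ε} = (v, v^♯)_{L²} + ε²(w, w^♯)_{L²} the scaled inner product on L²(S, ℝ³), u = (v, w)^T. Let F = {(v, ∫_z^1 ∇_H·v dz')^T : v ∈ H₁} and let P_ε be the orthogonal projection of L²(S, ℝ³) onto F with respect to (·,·)_{L²_ε}. Then P_ε(∇_ε f) = 0 for every f ∈ H¹(S, ℝ). -/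
open MeasureTheory

noncomputable section

/-- Points of the ambient space `ℝ³ = ℝ² × ℝ`. -/
abbrev Pt : Type := (ℝ × ℝ) × ℝ

def ex : Pt := ((1, 0), 0)
def ey : Pt := ((0, 1), 0)
def ez : Pt := ((0, 0), 1)

/-- Horizontal divergence of a horizontal vector field. -/
def divH (v : Pt → ℝ × ℝ) (p : Pt) : ℝ :=
  (fderiv ℝ v p ex).1 + (fderiv ℝ v p ey).2

/-- The scaled gradient `∇_ε f = (∇_H f, ε⁻² ∂_z f)`. -/
def gradEps (ε : ℝ) (f : Pt → ℝ) : Pt → (ℝ × ℝ) × ℝ :=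
  fun p => ((fderiv ℝ f p ex, fderiv ℝ f p ey), (ε ^ 2)⁻¹ * fderiv ℝ f p ez)

/-- The scaled inner product `(u, u')_{L²_ε} = (v, v')_{L²} + ε² (w, w')_{L²}` on vector
fields `u = (v, w)` over `S`. -/
def innerEps (S : Set Pt) (ε : ℝ) (u u' : Pt → (ℝ × ℝ) × ℝ) : ℝ :=
  (∫ p in S, ((u p).1.1 * (u' p).1.1 + (u p).1.2 * (u' p).1.2))
    + ε ^ 2 * ∫ p in S, (u p).2 * (u' p).2

/-- Membership in `F = {(v, ∫_z^1 ∇_H·v dz') : v ∈ H₁}`: the horizontal part is a `C¹`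
field supported in `S_H`, with vanishing vertically averaged horizontal divergence, and the
vertical part is reconstructed from the horizontal divergence. -/
def memF (S_H : Set (ℝ × ℝ)) (u : Pt → (ℝ × ℝ) × ℝ) : Prop :=
  ContDiff ℝ 1 (fun p => (u p).1) ∧
  (∀ (q : ℝ × ℝ) (z : ℝ), q ∉ S_H → (u (q, z)).1 = 0) ∧
  (∀ q : ℝ × ℝ, (∫ z in Set.Ioc (-1:ℝ) 1, divH (fun p => (u p).1) (q, z)) = 0) ∧
  (∀ p : Pt, (u p).2 = ∫ z in Set.Ioc p.2 1, divH (fun p' => (u p').1) (p.1, z))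

/- ### Auxiliary material -/

instance : Measure.IsAddHaarMeasure (volume : Measure Pt) :=
  Measure.prod.instIsAddHaarMeasure _ _

open Metric Filter Set Topology ENNReal in
/-- A differentiable function vanishing on a set has vanishing derivative at every
Lebesgue density point of that set. -/
theorem fderiv_zero_of_density {E G : Type*} [NormedAddCommGroup E] [NormedSpace ℝ E]
    [MeasurableSpace E] [BorelSpace E] [FiniteDimensional ℝ E]
    (μ : Measure E) [μ.IsAddHaarMeasure]
    [NormedAddCommGroup G] [NormedSpace ℝ G]
    {v : E → G} {L : E →L[ℝ] G} {A : Set E} {x : E}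
    (hA : ∀ a ∈ A, v a = 0) (hx : x ∈ A)
    (hd : HasFDerivAt v L x)
    (hdens : Tendsto (fun r => μ (A ∩ closedBall x r) / μ (closedBall x r))
      (𝓝[>] 0) (𝓝 1)) : L = 0 := by
  classical
  have key : ∀ e : E, ‖e‖ = 1 → ∀ δ : ℝ, 0 < δ → δ < 1 → ∀ ε : ℝ, 0 < ε →
      ‖L e‖ ≤ ε * (1 + δ) + ‖L‖ * δ := by
    intro e he δ hδ0 hδ1 ε hε
    set n := Module.finrank ℝ E with hn
    set κ := δ / (1 + δ) with hκdef
    have h1δ : (0:ℝ) < 1 + δ := by linarith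
    have hκ0 : 0 < κ := div_pos hδ0 h1δ
    have hκ1 : κ < 1 := by rw [hκdef, div_lt_one h1δ]; linarith
    have hc1 : (1 : ℝ≥0∞) - ENNReal.ofReal (κ ^ n) < 1 := by
      apply ENNReal.sub_lt_self ENNReal.one_ne_top one_ne_zero
      simp only [ne_eq, ENNReal.ofReal_eq_zero, not_le]
      positivity
    have hev1 : ∀ᶠ ρ in 𝓝[>] (0:ℝ),
        (1:ℝ≥0∞) - ENNReal.ofReal (κ ^ n) < μ (A ∩ closedBall x ρ) / μ (closedBall x ρ) :=
      hdens.eventually (eventually_gt_nhds hc1)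
    have happrox0 : ∀ᶠ y in 𝓝 x, ‖v y - v x - L (y - x)‖ ≤ ε * ‖y - x‖ := by
      have := hd.isLittleO.def hε
      filter_upwards [this] with y hy using hy
    obtain ⟨r₀, hr₀, happrox⟩ := Metric.nhds_basis_closedBall.eventually_iff.mp happrox0
    have hev2 : ∀ᶠ ρ in 𝓝[>] (0:ℝ), ρ ∈ Ioc (0:ℝ) r₀ :=
      eventually_of_mem (Ioc_mem_nhdsGT_of_mem ⟨le_rfl, hr₀⟩) fun ρ hρ => hρ
    obtain ⟨ρ, hρdens, hρ0, hρr₀⟩ := (hev1.and hev2).exists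
    set y := x + (ρ / (1 + δ)) • e with hy
    have hyx : ‖y - x‖ = ρ / (1 + δ) := by
      rw [hy]
      simp [norm_smul, he, abs_of_pos hρ0, abs_of_pos h1δ]
    have hsub : closedBall y (κ * ρ) ⊆ closedBall x ρ := by
      intro b hb
      rw [mem_closedBall, dist_eq_norm] at hb ⊢
      have : b - x = (b - y) + (y - x) := by abel
      rw [this]
      calc ‖(b - y) + (y - x)‖ ≤ ‖b - y‖ + ‖y - x‖ := norm_add_le _ _
        _ ≤ κ * ρ + ρ / (1 + δ) := by rw [hyx]; gcongr
        _ = ρ := by rw [hκdef]; field_simp; ring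
    have hBne : μ (closedBall x ρ) ≠ 0 := (measure_closedBall_pos μ x hρ0).ne'
    have hBtop : μ (closedBall x ρ) ≠ ⊤ := measure_closedBall_lt_top.ne
    have hsmall : μ (closedBall y (κ * ρ)) = ENNReal.ofReal (κ ^ n) * μ (closedBall x ρ) := by
      rw [Measure.addHaar_closedBall μ y (by positivity), Measure.addHaar_closedBall μ x hρ0.le,
        mul_pow, ENNReal.ofReal_mul (by positivity), mul_assoc]
    have hne : (A ∩ closedBall y (κ * ρ)).Nonempty := by
      by_contra hcon
      rw [Set.not_nonempty_iff_eq_empty] at hcon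
      have hdisj : Disjoint (A ∩ closedBall x ρ) (closedBall y (κ * ρ)) := by
        rw [Set.disjoint_left]
        intro b hb hb'
        exact absurd (Set.mem_inter hb.1 hb') (by simp [hcon])
      have hlt : (1 - ENNReal.ofReal (κ ^ n)) * μ (closedBall x ρ) < μ (A ∩ closedBall x ρ) := by
        rw [← ENNReal.lt_div_iff_mul_lt (Or.inl hBne) (Or.inl hBtop)]
        exact hρdens
      have hsum : μ (A ∩ closedBall x ρ) + μ (closedBall y (κ * ρ)) ≤ μ (closedBall x ρ) := by
        rw [← measure_union hdisj measurableSet_closedBall]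
        exact measure_mono (Set.union_subset Set.inter_subset_right hsub)
      have hone : (1 - ENNReal.ofReal (κ ^ n)) + ENNReal.ofReal (κ ^ n) = 1 :=
        tsub_add_cancel_of_le (by simpa using ENNReal.ofReal_le_one.mpr (pow_le_one₀ hκ0.le hκ1.le))
      have : μ (closedBall x ρ) < μ (closedBall x ρ) := by
        calc μ (closedBall x ρ) = (1 - ENNReal.ofReal (κ ^ n)) * μ (closedBall x ρ)
              + ENNReal.ofReal (κ ^ n) * μ (closedBall x ρ) := by
              rw [← add_mul, hone, one_mul]
          _ < μ (A ∩ closedBall x ρ) + μ (closedBall y (κ * ρ)) := by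
              rw [hsmall]
              exact ENNReal.add_lt_add_right
                (by rw [hsmall] at *; exact ENNReal.mul_ne_top ENNReal.ofReal_ne_top hBtop) hlt
          _ ≤ μ (closedBall x ρ) := hsum
      exact absurd this (lt_irrefl _)
    obtain ⟨a, haA, haB⟩ := hne
    have haBx : a ∈ closedBall x ρ := hsub haB
    have haxρ : ‖a - x‖ ≤ ρ := by rwa [mem_closedBall, dist_eq_norm] at haBx
    have hApprox : ‖L (a - x)‖ ≤ ε * ρ := by
      have h1 : ‖v a - v x - L (a - x)‖ ≤ ε * ‖a - x‖ :=
        happrox (by rw [mem_closedBall, dist_eq_norm]; exact haxρ.trans hρr₀)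
      have h1' : ‖L (a - x)‖ ≤ ε * ‖a - x‖ := by
        rw [hA a haA, hA x hx, sub_zero, zero_sub, norm_neg] at h1; exact h1
      calc ‖L (a - x)‖ ≤ ε * ‖a - x‖ := h1'
        _ ≤ ε * ρ := by gcongr
    have hay : ‖a - y‖ ≤ κ * ρ := by rwa [mem_closedBall, dist_eq_norm] at haB
    have hLyx : ‖L (y - x)‖ ≤ ε * ρ + ‖L‖ * (κ * ρ) := by
      have : y - x = (a - x) - (a - y) := by abel
      rw [this, map_sub]
      calc ‖L (a - x) - L (a - y)‖ ≤ ‖L (a - x)‖ + ‖L (a - y)‖ := norm_sub_le _ _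
        _ ≤ ε * ρ + ‖L‖ * (κ * ρ) :=
            add_le_add hApprox ((L.le_opNorm _).trans
              (mul_le_mul_of_nonneg_left hay (norm_nonneg (L : E →L[ℝ] G))))
    have hLyx2 : ‖L (y - x)‖ = (ρ / (1 + δ)) * ‖L e‖ := by
      have : y - x = (ρ / (1 + δ)) • e := by rw [hy]; abel
      rw [this, L.map_smul, norm_smul, Real.norm_eq_abs, abs_of_pos (div_pos hρ0 h1δ)]
    rw [hLyx2] at hLyx
    have hLnn : (0:ℝ) ≤ ‖L‖ := norm_nonneg L
    have hstep : ρ * ‖L e‖ ≤ (ε * (1 + δ) + ‖L‖ * δ) * ρ := by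
      have h := mul_le_mul_of_nonneg_right hLyx h1δ.le
      calc ρ * ‖L e‖ = ρ / (1 + δ) * ‖L e‖ * (1 + δ) := by field_simp
        _ ≤ (ε * ρ + ‖L‖ * (κ * ρ)) * (1 + δ) := h
        _ = (ε * (1 + δ) + ‖L‖ * δ) * ρ := by rw [hκdef]; field_simp
    have hstep' : ρ * ‖L e‖ ≤ ρ * (ε * (1 + δ) + ‖L‖ * δ) := by linarith
    exact le_of_mul_le_mul_left hstep' hρ0
  have unit : ∀ e : E, ‖e‖ = 1 → L e = 0 := by
    intro e he
    rw [← norm_le_zero_iff]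
    refine le_of_forall_pos_le_add fun ε' hε' => ?_
    set δ := min (ε' / (2 * (1 + ‖L‖))) (1/2) with hδdef
    have hL1 : (0:ℝ) < 1 + ‖L‖ := by positivity
    have hδ0 : 0 < δ := lt_min (by positivity) (by norm_num)
    have hδ1 : δ < 1 := lt_of_le_of_lt (min_le_right _ _) (by norm_num)
    have h1 := key e he δ hδ0 hδ1 (ε'/4) (by positivity)
    have h2 : δ ≤ ε' / (2 * (1 + ‖L‖)) := min_le_left _ _
    have h3 : δ ≤ 1/2 := min_le_right _ _
    have hLnn : (0:ℝ) ≤ ‖L‖ := norm_nonneg L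
    have h4 : ‖L‖ * δ ≤ ε' / 2 := by
      rw [le_div_iff₀ (by positivity : (0:ℝ) < 2 * (1 + ‖L‖))] at h2
      nlinarith
    nlinarith
  ext b
  rcases eq_or_ne b 0 with rfl | hb
  · simp
  · have hbe : ‖‖b‖⁻¹ • b‖ = 1 := by
      rw [norm_smul, norm_inv, norm_norm, inv_mul_cancel₀ (norm_ne_zero_iff.mpr hb)]
    have h0 := unit _ hbe
    rw [ContinuousLinearMap.map_smul, smul_eq_zero] at h0
    rcases h0 with h | h
    · exact absurd h (inv_ne_zero (norm_ne_zero_iff.mpr hb))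
    · simpa using h

/-- A continuous function is integrable on a bounded subset of a finite-dimensional space. -/
theorem cont_integrableOn {X : Type*} [NormedAddCommGroup X] [NormedSpace ℝ X]
    [FiniteDimensional ℝ X] [MeasureSpace X] [BorelSpace X]
    [IsFiniteMeasureOnCompacts (volume : Measure X)]
    {h : X → ℝ} (hh : Continuous h) {s : Set X} (hb : Bornology.IsBounded s) :
    IntegrableOn h s :=
  (hh.continuousOn.integrableOn_compact (Metric.isCompact_of_isClosed_isBounded
    isClosed_closure hb.closure)).mono_set subset_closure

/-- Fubini for a set integral over a product set. -/
theorem my_integral_prod {α β : Type*} [MeasureSpace α] [MeasureSpace β]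
    [SigmaFinite (volume : Measure α)] [SigmaFinite (volume : Measure β)]
    (T : Set α) (B : Set β) (h : α × β → ℝ) (hint : IntegrableOn h (T ×ˢ B)) :
    ∫ p in T ×ˢ B, h p = ∫ q in T, ∫ z in B, h (q, z) := by
  have h1 : (volume : Measure (α × β)).restrict (T ×ˢ B)
      = (volume.restrict T).prod (volume.restrict B) := by
    rw [Measure.prod_restrict, ← Measure.volume_eq_prod]
  have h2 : Integrable h ((volume.restrict T).prod (volume.restrict B)) := by
    rw [← h1]; exact hint
  rw [h1]
  exact integral_prod h h2

/-- Fubini (in the other order) for a set integral over a product set. -/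
theorem my_integral_prod_symm {α β : Type*} [MeasureSpace α] [MeasureSpace β]
    [SigmaFinite (volume : Measure α)] [SigmaFinite (volume : Measure β)]
    (T : Set α) (B : Set β) (h : α × β → ℝ) (hint : IntegrableOn h (T ×ˢ B)) :
    ∫ p in T ×ˢ B, h p = ∫ z in B, ∫ q in T, h (q, z) := by
  have h1 : (volume : Measure (α × β)).restrict (T ×ˢ B)
      = (volume.restrict T).prod (volume.restrict B) := by
    rw [Measure.prod_restrict, ← Measure.volume_eq_prod]
  have h2 : Integrable h ((volume.restrict T).prod (volume.restrict B)) := by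
    rw [← h1]; exact hint
  rw [h1]
  exact integral_prod_symm h h2

/-- If `P_ε` is the orthogonal projection of `L²(S, ℝ³)` onto
`F = {(v, ∫_z^1 ∇_H·v dz') : v ∈ H₁}` with respect to the scaled inner product
`(·,·)_{L²_ε}`, then `P_ε(∇_ε f) = 0` (in `L²_ε`) for every `f ∈ H¹(S, ℝ)`.
Here the projection is encoded by its two defining properties: `P_ε(∇_ε f) ∈ F` and
`∇_ε f − P_ε(∇_ε f)` is `L²_ε`-orthogonal to `F`. -/
theorem scaled_gradient_projection_vanishes
    (S_H : Set (ℝ × ℝ)) (hSm : MeasurableSet S_H) (hSb : Bornology.IsBounded S_H)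
    (ε : ℝ) (hε : 0 < ε)
    (f : Pt → ℝ) (hf : ContDiff ℝ 1 f)
    (Pg : Pt → (ℝ × ℝ) × ℝ)
    (hmem : memF S_H Pg)
    (hproj : ∀ u, memF S_H u →
      innerEps (S_H ×ˢ Set.Ioo (-1:ℝ) 1) ε (fun p => gradEps ε f p - Pg p) u = 0) :
    innerEps (S_H ×ˢ Set.Ioo (-1:ℝ) 1) ε Pg Pg = 0 := by
  classical
  have h0 := hproj Pg hmem
  obtain ⟨hC1, hzero, havg, hrec⟩ := hmem
  set v : Pt → ℝ × ℝ := fun p => (Pg p).1 with hvdef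
  have hv : ContDiff ℝ 1 v := hC1
  have hvc : Continuous v := hv.continuous
  have hfd : Differentiable ℝ f := hf.differentiable one_ne_zero
  have hvd : Differentiable ℝ v := hv.differentiable one_ne_zero
  have hDfc : Continuous (fderiv ℝ f) := hf.continuous_fderiv one_ne_zero
  have hgc : Continuous (divH v) := by
    unfold divH
    have h1 := hv.continuous_fderiv one_ne_zero
    exact ((h1.clm_apply continuous_const).fst).add ((h1.clm_apply continuous_const).snd)
  have hv0 : ∀ (q : ℝ × ℝ) (z : ℝ), q ∉ S_H → v (q, z) = 0 := hzero
  set S : Set Pt := S_H ×ˢ Set.Ioo (-1:ℝ) 1 with hSdef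
  have hSmeas : MeasurableSet S := hSm.prod measurableSet_Ioo
  have hSbdd : Bornology.IsBounded S := hSb.prod (Metric.isBounded_Ioo _ _)
  -- The continuous representative of the vertical component
  set W : Pt → ℝ := fun p => ∫ t in p.2..(1:ℝ), divH v (p.1, t) with hWdef
  have hWc : Continuous W := by
    have h : Continuous fun p : Pt => ∫ t in (1:ℝ)..p.2, divH v (p.1, t) :=
      intervalIntegral.continuous_parametric_intervalIntegral_of_continuous
        (μ := volume) (f := fun (p : Pt) (t : ℝ) => divH v (p.1, t)) (a₀ := (1:ℝ))
        (hgc.comp ((continuous_fst.fst).prodMk continuous_snd)) continuous_snd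
    have h2 : W = fun p : Pt => -∫ t in (1:ℝ)..p.2, divH v (p.1, t) := by
      funext p
      rw [hWdef]
      exact intervalIntegral.integral_symm _ _
    rw [h2]
    exact h.neg
  have hWeq : ∀ p : Pt, p ∈ S → (Pg p).2 = W p := by
    intro p hp
    have hple : p.2 ≤ 1 := hp.2.2.le
    rw [hrec p, hWdef]
    exact (intervalIntegral.integral_of_le hple).symm
  -- The product field `F = f • v` and its horizontal divergence
  set F : Pt → ℝ × ℝ := fun p => f p • v p with hFdef
  have hFc1 : ContDiff ℝ 1 F := hf.smul hv
  have hFd : Differentiable ℝ F := hFc1.differentiable one_ne_zero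
  have hFc : Continuous F := hFc1.continuous
  have hdivFc : Continuous (divH F) := by
    unfold divH
    have h1 := hFc1.continuous_fderiv one_ne_zero
    exact ((h1.clm_apply continuous_const).fst).add ((h1.clm_apply continuous_const).snd)
  have hdivF : ∀ p : Pt, divH F p
      = (fderiv ℝ f p ex * (v p).1 + fderiv ℝ f p ey * (v p).2) + f p * divH v p := by
    intro p
    have h1 : HasFDerivAt F (f p • fderiv ℝ v p + (fderiv ℝ f p).smulRight (v p)) p :=
      HasFDerivAt.smul (hfd p).hasFDerivAt (hvd p).hasFDerivAt
    unfold divH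
    rw [h1.fderiv]
    simp only [ContinuousLinearMap.add_apply, ContinuousLinearMap.coe_smul', Pi.smul_apply,
      ContinuousLinearMap.smulRight_apply, Prod.fst_add, Prod.snd_add, Prod.smul_fst,
      Prod.smul_snd, smul_eq_mul]
    ring
  -- Vertical integration by parts
  have hvert : ∀ q : ℝ × ℝ,
      (∫ z in Set.Ioo (-1:ℝ) 1, fderiv ℝ f (q, z) ez * W (q, z))
        = ∫ z in Set.Ioo (-1:ℝ) 1, f (q, z) * divH v (q, z) := by
    intro q
    have hgq : Continuous fun z : ℝ => divH v (q, z) := hgc.comp (Continuous.prodMk_right q)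
    have hu : ∀ z ∈ Set.uIcc (-1:ℝ) 1,
        HasDerivAt (fun z => f (q, z)) (fderiv ℝ f (q, z) ez) z := by
      intro z _
      have h1 : HasDerivAt (fun z : ℝ => (q, z)) ((0 : ℝ × ℝ), (1:ℝ)) z :=
        (hasDerivAt_const z q).prodMk (hasDerivAt_id z)
      have h2 := (hfd (q, z)).hasFDerivAt.comp_hasDerivAt z h1
      exact h2
    have hw : ∀ z ∈ Set.uIcc (-1:ℝ) 1,
        HasDerivAt (fun z => W (q, z)) (-(divH v (q, z))) z := by
      intro z _
      have h3 : HasDerivAt (fun u : ℝ => ∫ t in u..(1:ℝ), divH v (q, t)) (-(divH v (q, z))) z :=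
        intervalIntegral.integral_hasDerivAt_left (hgq.intervalIntegrable _ _)
          (hgq.stronglyMeasurableAtFilter _ _) hgq.continuousAt
      exact h3
    have hu'c : Continuous fun z : ℝ => fderiv ℝ f (q, z) ez :=
      (hDfc.comp (Continuous.prodMk_right q)).clm_apply continuous_const
    have hibp := intervalIntegral.integral_mul_deriv_eq_deriv_mul hu hw
      (hu'c.intervalIntegrable _ _) (hgq.neg.intervalIntegrable _ _)
    have hW1 : W (q, (1:ℝ)) = 0 := by
      show (∫ t in (1:ℝ)..(1:ℝ), divH v (q, t)) = 0
      simp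
    have hWm1 : W (q, (-1:ℝ)) = 0 := by
      show (∫ t in (-1:ℝ)..(1:ℝ), divH v (q, t)) = 0
      rw [intervalIntegral.integral_of_le (by norm_num : (-1:ℝ) ≤ 1)]
      exact havg q
    rw [hW1, hWm1] at hibp
    simp only [mul_zero, sub_zero, zero_sub, mul_neg] at hibp
    rw [intervalIntegral.integral_neg] at hibp
    have hibp2 : (∫ z in (-1:ℝ)..1, f (q, z) * divH v (q, z))
        = ∫ z in (-1:ℝ)..1, fderiv ℝ f (q, z) ez * W (q, z) := by
      have := neg_injective hibp
      linarith [this]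
    rw [← integral_Ioc_eq_integral_Ioo, ← integral_Ioc_eq_integral_Ioo,
      ← intervalIntegral.integral_of_le (show (-1:ℝ) ≤ 1 by norm_num),
      ← intervalIntegral.integral_of_le (show (-1:ℝ) ≤ 1 by norm_num)]
    exact hibp2.symm
  -- Almost-everywhere vanishing of `divH v` outside `S_H`
  have hg0 : ∀ᵐ p : Pt ∂(volume.restrict ((S_Hᶜ ×ˢ (Set.univ : Set ℝ)) : Set Pt)),
      divH v p = 0 := by
    have hAm : MeasurableSet ((S_Hᶜ ×ˢ (Set.univ : Set ℝ)) : Set Pt) :=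
      hSm.compl.prod MeasurableSet.univ
    filter_upwards [Besicovitch.ae_tendsto_measure_inter_div (volume : Measure Pt)
      ((S_Hᶜ ×ˢ (Set.univ : Set ℝ)) : Set Pt), ae_restrict_mem hAm] with p hp hpA
    have hz : ∀ a ∈ ((S_Hᶜ ×ˢ (Set.univ : Set ℝ)) : Set Pt), v a = 0 := by
      rintro ⟨a1, a2⟩ ⟨h1, -⟩
      exact hv0 a1 a2 h1
    have hL := fderiv_zero_of_density (volume : Measure Pt) hz hpA (hvd p).hasFDerivAt hp
    unfold divH
    rw [hL]
    simp
  -- A big rectangle containing `S_H`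
  obtain ⟨R, hR0, hRsub⟩ := hSb.subset_ball_lt 0 0
  have hRR : (-R:ℝ) ≤ R := by linarith
  set rect : Set (ℝ × ℝ) := Set.Ioc (-R) R ×ˢ Set.Ioc (-R) R with hrectdef
  set Q : Set Pt := rect ×ˢ Set.Ioo (-1:ℝ) 1 with hQdef
  have hrectmeas : MeasurableSet rect := measurableSet_Ioc.prod measurableSet_Ioc
  have hQmeas : MeasurableSet Q := hrectmeas.prod measurableSet_Ioo
  have hrectbdd : Bornology.IsBounded rect :=
    (Metric.isBounded_Ioc _ _).prod (Metric.isBounded_Ioc _ _)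
  have hQbdd : Bornology.IsBounded Q := hrectbdd.prod (Metric.isBounded_Ioo _ _)
  have hSQ : S ⊆ Q := by
    rintro ⟨q, z⟩ ⟨hq, hz⟩
    refine ⟨?_, hz⟩
    have hqball := hRsub hq
    rw [Metric.mem_ball, dist_zero_right] at hqball
    have h1 : |q.1| < R := lt_of_le_of_lt (by simpa using norm_fst_le q) hqball
    have h2 : |q.2| < R := lt_of_le_of_lt (by simpa using norm_snd_le q) hqball
    rw [abs_lt] at h1 h2
    exact ⟨⟨h1.1, h1.2.le⟩, ⟨h2.1, h2.2.le⟩⟩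
  have hnotmem : ∀ q : ℝ × ℝ, R ≤ ‖q‖ → q ∉ S_H := by
    intro q hq hmem'
    have := hRsub hmem'
    rw [Metric.mem_ball, dist_zero_right] at this
    linarith
  -- a.e. vanishing of `divH F` on `Q \ S`
  have haeQ : ∀ᵐ p : Pt ∂(volume : Measure Pt), p ∈ Q \ S → divH F p = 0 := by
    have hsub2 : Q \ S ⊆ ((S_Hᶜ ×ˢ (Set.univ : Set ℝ)) : Set Pt) := by
      rintro ⟨q, z⟩ ⟨⟨hqr, hz⟩, hnot⟩
      exact ⟨fun hqS => hnot ⟨hqS, hz⟩, trivial⟩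
    have h1 : ∀ᵐ p : Pt ∂(volume.restrict (Q \ S)), divH v p = 0 :=
      hg0.filter_mono (ae_mono (Measure.restrict_mono hsub2 le_rfl))
    rw [ae_restrict_iff' (hQmeas.diff hSmeas)] at h1
    filter_upwards [h1] with p hp hpmem
    have hv0p : v p = 0 := by
      have h2 := hsub2 hpmem
      obtain ⟨p1, p2⟩ := p
      exact hv0 p1 p2 h2.1
    rw [hdivF p, hp hpmem, hv0p]
    simp
  -- per-slice divergence theorem
  have hdivz : ∀ z : ℝ, (∫ q in rect, divH F (q, z)) = 0 := by
    intro z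
    have hcont : Continuous fun q : ℝ × ℝ => divH F (q, z) :=
      hdivFc.comp (continuous_id.prodMk continuous_const)
    have hint : IntegrableOn (fun q : ℝ × ℝ => divH F (q, z)) rect :=
      cont_integrableOn hcont hrectbdd
    rw [hrectdef]
    rw [my_integral_prod _ _ _ hint]
    set A1 : ℝ × ℝ → ℝ := fun q => (F (q, z)).1 with hA1def
    set A2 : ℝ × ℝ → ℝ := fun q => (F (q, z)).2 with hA2def
    set A1' : ℝ × ℝ → (ℝ × ℝ) →L[ℝ] ℝ := fun q =>
      (ContinuousLinearMap.fst ℝ ℝ ℝ).comp ((fderiv ℝ F (q, z)).comp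
        (ContinuousLinearMap.inl ℝ (ℝ × ℝ) ℝ)) with hA1'def
    set A2' : ℝ × ℝ → (ℝ × ℝ) →L[ℝ] ℝ := fun q =>
      (ContinuousLinearMap.snd ℝ ℝ ℝ).comp ((fderiv ℝ F (q, z)).comp
        (ContinuousLinearMap.inl ℝ (ℝ × ℝ) ℝ)) with hA2'def
    have hder : ∀ q : ℝ × ℝ, HasFDerivAt (fun q : ℝ × ℝ => F (q, z))
        ((fderiv ℝ F (q, z)).comp (ContinuousLinearMap.inl ℝ (ℝ × ℝ) ℝ)) q := by
      intro q
      exact (hFd (q, z)).hasFDerivAt.comp q (hasFDerivAt_prodMk_left (𝕜 := ℝ) q z)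
    have hder1 : ∀ q : ℝ × ℝ, HasFDerivAt A1 (A1' q) q := fun q => (hder q).fst
    have hder2 : ∀ q : ℝ × ℝ, HasFDerivAt A2 (A2' q) q := fun q => (hder q).snd
    have hmatch : ∀ x y : ℝ, A1' (x, y) (1, 0) + A2' (x, y) (0, 1) = divH F ((x, y), z) := by
      intro x y
      rfl
    have hA1c : Continuous A1 := (hFc.comp (continuous_id.prodMk continuous_const)).fst
    have hA2c : Continuous A2 := (hFc.comp (continuous_id.prodMk continuous_const)).snd
    have hHi : IntegrableOn (fun q : ℝ × ℝ => A1' q (1, 0) + A2' q (0, 1))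
        (Set.uIcc (-R) R ×ˢ Set.uIcc (-R) R) := by
      have hint2 : IntegrableOn (fun q : ℝ × ℝ => divH F (q, z))
          (Set.uIcc (-R) R ×ˢ Set.uIcc (-R) R) :=
        cont_integrableOn hcont (isCompact_uIcc.prod isCompact_uIcc).isBounded
      exact hint2.congr_fun (fun q _ => by
          obtain ⟨x, y⟩ := q
          exact (hmatch x y).symm)
        (measurableSet_uIcc.prod measurableSet_uIcc)
    have hdiv := MeasureTheory.integral2_divergence_prod_of_hasFDerivAt_off_countable
      A1 A2 A1' A2' (-R) (-R) R R ∅ Set.countable_empty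
      hA1c.continuousOn hA2c.continuousOn
      (fun x _ => hder1 x) (fun x _ => hder2 x) hHi
    have hb1 : (∫ x in (-R)..R, A2 (x, R)) = 0 := by
      have hz1 : ∀ x : ℝ, A2 (x, R) = 0 := by
        intro x
        have hn : ((x, R) : ℝ × ℝ) ∉ S_H := hnotmem _ (by
          have h5 := norm_snd_le ((x, R) : ℝ × ℝ)
          simp only [Real.norm_eq_abs] at h5
          rw [abs_of_pos hR0] at h5
          exact h5)
        show (F ((x, R), z)).2 = 0
        rw [hFdef]
        simp [hv0 _ _ hn]
      simp [hz1]
    have hb2 : (∫ x in (-R)..R, A2 (x, -R)) = 0 := by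
      have hz1 : ∀ x : ℝ, A2 (x, -R) = 0 := by
        intro x
        have hn : ((x, -R) : ℝ × ℝ) ∉ S_H := hnotmem _ (by
          have h5 := norm_snd_le ((x, -R) : ℝ × ℝ)
          simp only [Real.norm_eq_abs] at h5
          rw [abs_neg, abs_of_pos hR0] at h5
          exact h5)
        show (F ((x, -R), z)).2 = 0
        rw [hFdef]
        simp [hv0 _ _ hn]
      simp [hz1]
    have hb3 : (∫ y in (-R)..R, A1 (R, y)) = 0 := by
      have hz1 : ∀ y : ℝ, A1 (R, y) = 0 := by
        intro y
        have hn : ((R, y) : ℝ × ℝ) ∉ S_H := hnotmem _ (by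
          have h5 := norm_fst_le ((R, y) : ℝ × ℝ)
          simp only [Real.norm_eq_abs] at h5
          rw [abs_of_pos hR0] at h5
          exact h5)
        show (F ((R, y), z)).1 = 0
        rw [hFdef]
        simp [hv0 _ _ hn]
      simp [hz1]
    have hb4 : (∫ y in (-R)..R, A1 (-R, y)) = 0 := by
      have hz1 : ∀ y : ℝ, A1 (-R, y) = 0 := by
        intro y
        have hn : ((-R, y) : ℝ × ℝ) ∉ S_H := hnotmem _ (by
          have h5 := norm_fst_le ((-R, y) : ℝ × ℝ)
          simp only [Real.norm_eq_abs] at h5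
          rw [abs_neg, abs_of_pos hR0] at h5
          exact h5)
        show (F ((-R, y), z)).1 = 0
        rw [hFdef]
        simp [hv0 _ _ hn]
      simp [hz1]
    rw [hb1, hb2, hb3, hb4] at hdiv
    calc (∫ x in Set.Ioc (-R) R, ∫ y in Set.Ioc (-R) R, divH F ((x, y), z))
        = ∫ x in (-R)..R, ∫ y in (-R)..R, divH F ((x, y), z) := by
          rw [intervalIntegral.integral_of_le hRR]
          refine setIntegral_congr_fun measurableSet_Ioc fun x _ => ?_
          rw [intervalIntegral.integral_of_le hRR]
      _ = ∫ x in (-R)..R, ∫ y in (-R)..R, A1' (x, y) (1, 0) + A2' (x, y) (0, 1) := by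
          simp only [hmatch]
      _ = 0 := by rw [hdiv]; ring
  -- integrability over S
  have hc1 : Continuous (fun p =>
      (gradEps ε f p).1.1 * (Pg p).1.1 + (gradEps ε f p).1.2 * (Pg p).1.2) :=
    ((hDfc.clm_apply continuous_const).mul hvc.fst).add
      ((hDfc.clm_apply continuous_const).mul hvc.snd)
  have hI1 : IntegrableOn (fun p =>
      (gradEps ε f p).1.1 * (Pg p).1.1 + (gradEps ε f p).1.2 * (Pg p).1.2) S :=
    cont_integrableOn hc1 hSbdd
  have hc4 : Continuous (fun p => (Pg p).1.1 * (Pg p).1.1 + (Pg p).1.2 * (Pg p).1.2) :=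
    (hvc.fst.mul hvc.fst).add (hvc.snd.mul hvc.snd)
  have hI4 : IntegrableOn (fun p => (Pg p).1.1 * (Pg p).1.1 + (Pg p).1.2 * (Pg p).1.2) S :=
    cont_integrableOn hc4 hSbdd
  have hI2 : IntegrableOn (fun p => f p * divH v p) S :=
    cont_integrableOn (hf.continuous.mul hgc) hSbdd
  have hI3 : IntegrableOn (fun p => fderiv ℝ f p ez * W p) S :=
    cont_integrableOn ((hDfc.clm_apply continuous_const).mul hWc) hSbdd
  have hI1' : IntegrableOn (fun p =>
      fderiv ℝ f p ex * (v p).1 + fderiv ℝ f p ey * (v p).2) S := hI1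
  have hI5 : IntegrableOn (fun p => W p * W p) S := cont_integrableOn (hWc.mul hWc) hSbdd
  have hI3' : IntegrableOn (fun p => (gradEps ε f p).2 * (Pg p).2) S := by
    have hc3 : Continuous (fun p => ((ε ^ 2)⁻¹ * fderiv ℝ f p ez) * W p) :=
      (continuous_const.mul (hDfc.clm_apply continuous_const)).mul hWc
    have hI3'' : IntegrableOn (fun p => ((ε ^ 2)⁻¹ * fderiv ℝ f p ez) * W p) S :=
      cont_integrableOn hc3 hSbdd
    refine hI3''.congr_fun (fun p hp => ?_) hSmeas
    show ((ε ^ 2)⁻¹ * fderiv ℝ f p ez) * W p = (gradEps ε f p).2 * (Pg p).2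
    rw [hWeq p hp]
    rfl
  have hI5' : IntegrableOn (fun p => (Pg p).2 * (Pg p).2) S := by
    refine hI5.congr_fun (fun p hp => ?_) hSmeas
    show W p * W p = (Pg p).2 * (Pg p).2
    rw [hWeq p hp]
  -- the key orthogonality: (∇_ε f, Pg)_ε = 0
  have hJ : (∫ p in S, fderiv ℝ f p ez * W p) = ∫ p in S, f p * divH v p := by
    rw [hSdef] at hI3 hI2 ⊢
    rw [my_integral_prod _ _ _ hI3, my_integral_prod _ _ _ hI2]
    refine setIntegral_congr_fun hSm fun q _ => ?_
    simpa using hvert q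
  have hQeq : (∫ p in S, divH F p) = 0 := by
    have hIQ : IntegrableOn (divH F) Q := cont_integrableOn hdivFc hQbdd
    have h1 : (∫ p in S, divH F p) = ∫ p in Q, divH F p :=
      (setIntegral_eq_of_subset_of_ae_diff_eq_zero hQmeas.nullMeasurableSet hSQ haeQ).symm
    rw [h1, hQdef]
    rw [my_integral_prod_symm _ _ _ hIQ]
    calc (∫ z in Set.Ioo (-1:ℝ) 1, ∫ q in rect, divH F (q, z))
        = ∫ z in Set.Ioo (-1:ℝ) 1, (0:ℝ) :=
          setIntegral_congr_fun measurableSet_Ioo fun z _ => hdivz z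
      _ = 0 := by simp
  have key : (∫ p in S, ((gradEps ε f p).1.1 * (Pg p).1.1 + (gradEps ε f p).1.2 * (Pg p).1.2))
      + ε ^ 2 * ∫ p in S, (gradEps ε f p).2 * (Pg p).2 = 0 := by
    have e2 : (∫ p in S, (gradEps ε f p).2 * (Pg p).2)
        = (ε ^ 2)⁻¹ * ∫ p in S, fderiv ℝ f p ez * W p := by
      rw [← integral_const_mul]
      refine setIntegral_congr_fun hSmeas fun p hp => ?_
      show (gradEps ε f p).2 * (Pg p).2 = (ε ^ 2)⁻¹ * (fderiv ℝ f p ez * W p)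
      rw [hWeq p hp]
      show (ε ^ 2)⁻¹ * fderiv ℝ f p ez * W p = _
      ring
    have e1 : (∫ p in S, ((gradEps ε f p).1.1 * (Pg p).1.1 + (gradEps ε f p).1.2 * (Pg p).1.2))
        = ∫ p in S, (fderiv ℝ f p ex * (v p).1 + fderiv ℝ f p ey * (v p).2) := rfl
    rw [e1, e2, ← mul_assoc, mul_inv_cancel₀ (by positivity : (ε:ℝ) ^ 2 ≠ 0), one_mul, hJ,
      ← integral_add hI1' hI2]
    calc (∫ p in S, ((fderiv ℝ f p ex * (v p).1 + fderiv ℝ f p ey * (v p).2)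
            + f p * divH v p))
        = ∫ p in S, divH F p :=
          setIntegral_congr_fun hSmeas fun p _ => (hdivF p).symm
      _ = 0 := hQeq
  -- expand the projection identity and conclude
  unfold innerEps at h0 ⊢
  have hsplit1 : (∫ p in S, ((gradEps ε f p - Pg p).1.1 * (Pg p).1.1
        + (gradEps ε f p - Pg p).1.2 * (Pg p).1.2))
      = (∫ p in S, ((gradEps ε f p).1.1 * (Pg p).1.1 + (gradEps ε f p).1.2 * (Pg p).1.2))
        - ∫ p in S, ((Pg p).1.1 * (Pg p).1.1 + (Pg p).1.2 * (Pg p).1.2) := by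
    rw [← integral_sub hI1 hI4]
    refine setIntegral_congr_fun hSmeas fun p _ => ?_
    simp only [Prod.fst_sub, Prod.snd_sub]
    ring
  have hsplit2 : (∫ p in S, (gradEps ε f p - Pg p).2 * (Pg p).2)
      = (∫ p in S, (gradEps ε f p).2 * (Pg p).2) - ∫ p in S, (Pg p).2 * (Pg p).2 := by
    rw [← integral_sub hI3' hI5']
    refine setIntegral_congr_fun hSmeas fun p _ => ?_
    simp only [Prod.snd_sub]
    ring
  simp only at h0
  rw [hsplit1, hsplit2] at h0
  linear_combination key - h0
end
end

section
/- For any ξ > 0 there is C_ξ > 0 such that for all V ∈ H¹(S, ℝ²), v ∈ H²(S, ℝ²) and W ∈ H¹(S, ℝ): |(W V, ∂_z v)_{L²}| ≤ C_ξ (1 + ‖v‖_{H¹}² ‖v‖_{H²}²)(‖V‖_{L²}² + ‖W‖_{L²}²) + ξ (‖V‖_{H¹}² + ‖W‖_{H¹}²). -/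
open MeasureTheory

noncomputable section

/-- Dot product on `ℝ²`. -/
def inner2 (a b : ℝ × ℝ) : ℝ := a.1 * b.1 + a.2 * b.2

/-- Squared `L²` norm. -/
def L2sq {F : Type*} [NormedAddCommGroup F] (f : Pt → F) : ℝ := ∫ p : Pt, ‖f p‖ ^ 2

/-- Squared `H^m` Sobolev norm (via iterated derivatives). -/
def HSobSq {F : Type*} [NormedAddCommGroup F] [NormedSpace ℝ F] (m : ℕ) (f : Pt → F) : ℝ :=
  ∑ n ∈ Finset.range (m + 1), ∫ p : Pt, ‖iteratedFDeriv ℝ n f p‖ ^ 2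

/- ### Auxiliary material -/

open scoped ENNReal NNReal

instance haarR2 : (volume : Measure (ℝ × ℝ)).IsAddHaarMeasure := by
  rw [MeasureTheory.Measure.volume_eq_prod]; infer_instance
instance haarPt : (volume : Measure Pt).IsAddHaarMeasure := by
  rw [MeasureTheory.Measure.volume_eq_prod]; infer_instance

section ENNRealLemmas
variable {α : Type*} [MeasurableSpace α] {μ : Measure α}

lemma holder3 (f g h : α → ℝ≥0∞)
    (hf : AEMeasurable f μ) (hg : AEMeasurable g μ) (hh : AEMeasurable h μ) :
    ∫⁻ a, f a * g a * h a ∂μ ≤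
      (∫⁻ a, f a ^ (3:ℝ) ∂μ) ^ (1/3:ℝ) * (∫⁻ a, g a ^ (3:ℝ) ∂μ) ^ (1/3:ℝ) *
      (∫⁻ a, h a ^ (3:ℝ) ∂μ) ^ (1/3:ℝ) := by
  have h32 : ((3:ℝ)/2).HolderConjugate 3 := by rw [Real.holderConjugate_iff]; norm_num
  have h22 : (2:ℝ).HolderConjugate 2 := by rw [Real.holderConjugate_iff]; norm_num
  have step1 : ∫⁻ a, f a * g a * h a ∂μ ≤
      (∫⁻ a, (f a * g a) ^ ((3:ℝ)/2) ∂μ) ^ (1/((3:ℝ)/2)) * (∫⁻ a, h a ^ (3:ℝ) ∂μ) ^ (1/3:ℝ) :=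
    ENNReal.lintegral_mul_le_Lp_mul_Lq μ h32 (hf.mul hg) hh
  have step2 : ∫⁻ a, (f a * g a) ^ ((3:ℝ)/2) ∂μ ≤
      (∫⁻ a, f a ^ (3:ℝ) ∂μ) ^ (1/2:ℝ) * (∫⁻ a, g a ^ (3:ℝ) ∂μ) ^ (1/2:ℝ) := by
    have := ENNReal.lintegral_mul_le_Lp_mul_Lq μ h22
      (hf.pow_const ((3:ℝ)/2)) (hg.pow_const ((3:ℝ)/2))
    calc ∫⁻ a, (f a * g a) ^ ((3:ℝ)/2) ∂μ
        = ∫⁻ a, f a ^ ((3:ℝ)/2) * g a ^ ((3:ℝ)/2) ∂μ := by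
          simp_rw [ENNReal.mul_rpow_of_nonneg _ _ (by norm_num : (0:ℝ) ≤ 3/2)]
      _ ≤ (∫⁻ a, (f a ^ ((3:ℝ)/2)) ^ (2:ℝ) ∂μ) ^ (1/2:ℝ) *
          (∫⁻ a, (g a ^ ((3:ℝ)/2)) ^ (2:ℝ) ∂μ) ^ (1/2:ℝ) := this
      _ = _ := by simp_rw [← ENNReal.rpow_mul]; norm_num
  calc ∫⁻ a, f a * g a * h a ∂μ
      ≤ (∫⁻ a, (f a * g a) ^ ((3:ℝ)/2) ∂μ) ^ (1/((3:ℝ)/2)) * (∫⁻ a, h a ^ (3:ℝ) ∂μ) ^ (1/3:ℝ) := step1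
    _ ≤ ((∫⁻ a, f a ^ (3:ℝ) ∂μ) ^ (1/2:ℝ) * (∫⁻ a, g a ^ (3:ℝ) ∂μ) ^ (1/2:ℝ)) ^ (1/((3:ℝ)/2))
        * (∫⁻ a, h a ^ (3:ℝ) ∂μ) ^ (1/3:ℝ) := by
        gcongr
    _ = _ := by
        rw [ENNReal.mul_rpow_of_nonneg _ _ (by norm_num : (0:ℝ) ≤ 1/((3:ℝ)/2)),
          ← ENNReal.rpow_mul, ← ENNReal.rpow_mul]
        norm_num

lemma interp3 (f : α → ℝ≥0∞) (hf : AEMeasurable f μ) :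
    (∫⁻ a, f a ^ (3:ℝ) ∂μ) ^ (1/3:ℝ) ≤
      (∫⁻ a, f a ^ (2:ℝ) ∂μ) ^ (1/4:ℝ) * (∫⁻ a, f a ^ (6:ℝ) ∂μ) ^ (1/12:ℝ) := by
  have hc : ((4:ℝ)/3).HolderConjugate 4 := by rw [Real.holderConjugate_iff]; norm_num
  have key : ∫⁻ a, f a ^ (3:ℝ) ∂μ ≤
      (∫⁻ a, f a ^ (2:ℝ) ∂μ) ^ (3/4:ℝ) * (∫⁻ a, f a ^ (6:ℝ) ∂μ) ^ (1/4:ℝ) := by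
    have := ENNReal.lintegral_mul_le_Lp_mul_Lq μ hc
      (hf.pow_const ((3:ℝ)/2)) (hf.pow_const ((3:ℝ)/2))
    calc ∫⁻ a, f a ^ (3:ℝ) ∂μ
        = ∫⁻ a, f a ^ ((3:ℝ)/2) * f a ^ ((3:ℝ)/2) ∂μ := by
          simp_rw [← ENNReal.rpow_add_of_nonneg _ _ (by norm_num : (0:ℝ) ≤ 3/2) (by norm_num : (0:ℝ) ≤ 3/2)]
          norm_num
      _ ≤ (∫⁻ a, (f a ^ ((3:ℝ)/2)) ^ ((4:ℝ)/3) ∂μ) ^ (1/((4:ℝ)/3)) *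
          (∫⁻ a, (f a ^ ((3:ℝ)/2)) ^ (4:ℝ) ∂μ) ^ (1/4:ℝ) := this
      _ = _ := by simp_rw [← ENNReal.rpow_mul]; norm_num
  calc (∫⁻ a, f a ^ (3:ℝ) ∂μ) ^ (1/3:ℝ)
      ≤ ((∫⁻ a, f a ^ (2:ℝ) ∂μ) ^ (3/4:ℝ) * (∫⁻ a, f a ^ (6:ℝ) ∂μ) ^ (1/4:ℝ)) ^ (1/3:ℝ) :=
        ENNReal.rpow_le_rpow key (by norm_num)
    _ = _ := by
        rw [ENNReal.mul_rpow_of_nonneg _ _ (by norm_num : (0:ℝ) ≤ 1/3),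
          ← ENNReal.rpow_mul, ← ENNReal.rpow_mul]
        norm_num

end ENNRealLemmas

lemma norm_ez : ‖ez‖ = 1 := by
  simp [ez, Prod.norm_def]

theorem ofReal_norm_eq_coe_nnnorm {E : Type*} [SeminormedAddGroup E] (a : E) :
    ENNReal.ofReal ‖a‖ = (‖a‖₊ : ℝ≥0∞) := ofReal_norm a

lemma coe_nnnorm_eq {F G : Type*} [NormedAddCommGroup F] [NormedAddCommGroup G]
    {x : F} {y : G} (h : ‖x‖ = ‖y‖) : (‖x‖₊ : ℝ≥0∞) = (‖y‖₊ : ℝ≥0∞) := by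
  rw [← ofReal_norm_eq_coe_nnnorm, ← ofReal_norm_eq_coe_nnnorm, h]

section conv
variable {F : Type*} [NormedAddCommGroup F]

lemma lint_sq_eq (f : Pt → F) (hc : Continuous f) (hs : HasCompactSupport f) :
    ∫⁻ p, (‖f p‖₊ : ℝ≥0∞) ^ (2:ℝ) = ENNReal.ofReal (∫ p : Pt, ‖f p‖ ^ 2) := by
  have hi : Integrable (fun p : Pt => ‖f p‖ ^ 2) volume := by
    have h1 : HasCompactSupport (fun p : Pt => ‖f p‖ ^ 2) :=
      hs.comp_left (g := fun t : F => ‖t‖ ^ 2) (by simp)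
    exact ((hc.norm.pow 2)).integrable_of_hasCompactSupport h1
  rw [ofReal_integral_eq_lintegral_ofReal hi
    (Filter.Eventually.of_forall fun p => by positivity)]
  congr 1
  funext p
  rw [ENNReal.ofReal_pow (norm_nonneg _), ← ENNReal.rpow_natCast (ENNReal.ofReal ‖f p‖) 2]
  simp [ENNReal.ofReal, Real.toNNReal_coe, ← coe_nnnorm, Real.toNNReal_of_nonneg (norm_nonneg _)]

end conv

section sobolev
variable {F : Type*} [NormedAddCommGroup F] [NormedSpace ℝ F] [FiniteDimensional ℝ F]

lemma L6_bound (u : Pt → F) (hu : ContDiff ℝ 1 u) (h2u : HasCompactSupport u) :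
    (∫⁻ p, (‖u p‖₊ : ℝ≥0∞) ^ (6:ℝ)) ^ (1/6:ℝ) ≤
      (SNormLESNormFDerivOfEqConst F (volume : Measure Pt) 2 : ℝ≥0∞) *
      (∫⁻ p, (‖fderiv ℝ u p‖₊ : ℝ≥0∞) ^ (2:ℝ)) ^ (1/2:ℝ) := by
  have h := MeasureTheory.eLpNorm_le_eLpNorm_fderiv_of_eq (volume : Measure Pt) hu h2u
    (p := 2) (p' := 6) (by norm_num) (by simp) (by simp; norm_num)
  rw [eLpNorm_eq_lintegral_rpow_enorm_toReal (by norm_num) (by norm_num),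
    eLpNorm_eq_lintegral_rpow_enorm_toReal (by norm_num) (by norm_num)] at h
  simp at h ⊢; exact h

lemma sqrt_coe_le {C : ℝ≥0} : ((C : ℝ≥0∞)) ^ (1/2:ℝ) ≤ 1 + (C : ℝ≥0∞) := by
  have h1 : (C : ℝ≥0∞) ≤ (1 + (C:ℝ≥0∞)) ^ (2:ℕ) := by
    calc (C : ℝ≥0∞) ≤ 1 + (C:ℝ≥0∞) := le_add_self
      _ ≤ (1 + (C:ℝ≥0∞)) ^ (2:ℕ) := le_self_pow₀ (le_add_right le_rfl) two_ne_zero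
  calc ((C : ℝ≥0∞)) ^ (1/2:ℝ) ≤ ((1 + (C:ℝ≥0∞)) ^ (2:ℕ)) ^ (1/2:ℝ) :=
      ENNReal.rpow_le_rpow (by exact_mod_cast h1) (by norm_num)
    _ = 1 + (C:ℝ≥0∞) := by
      rw [← ENNReal.rpow_natCast (1 + (C:ℝ≥0∞)) 2, ← ENNReal.rpow_mul]
      norm_num

lemma L3_bound (u : Pt → F) (hu : ContDiff ℝ 1 u) (h2u : HasCompactSupport u) :
    (∫⁻ p, (‖u p‖₊ : ℝ≥0∞) ^ (3:ℝ)) ^ (1/3:ℝ) ≤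
      (1 + (SNormLESNormFDerivOfEqConst F (volume : Measure Pt) 2 : ℝ≥0∞)) *
      ((∫⁻ p, (‖u p‖₊ : ℝ≥0∞) ^ (2:ℝ)) ^ (1/4:ℝ) *
       (∫⁻ p, (‖fderiv ℝ u p‖₊ : ℝ≥0∞) ^ (2:ℝ)) ^ (1/4:ℝ)) := by
  set C : ℝ≥0 := SNormLESNormFDerivOfEqConst F (volume : Measure Pt) 2
  have hmeas : AEMeasurable (fun p : Pt => (‖u p‖₊ : ℝ≥0∞)) volume :=
    (ENNReal.continuous_coe.comp hu.continuous.nnnorm).measurable.aemeasurable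
  calc (∫⁻ p, (‖u p‖₊ : ℝ≥0∞) ^ (3:ℝ)) ^ (1/3:ℝ)
      ≤ (∫⁻ p, (‖u p‖₊ : ℝ≥0∞) ^ (2:ℝ)) ^ (1/4:ℝ) *
        (∫⁻ p, (‖u p‖₊ : ℝ≥0∞) ^ (6:ℝ)) ^ (1/12:ℝ) := interp3 _ hmeas
    _ ≤ (∫⁻ p, (‖u p‖₊ : ℝ≥0∞) ^ (2:ℝ)) ^ (1/4:ℝ) *
        (((C:ℝ≥0∞)) ^ (1/2:ℝ) * (∫⁻ p, (‖fderiv ℝ u p‖₊ : ℝ≥0∞) ^ (2:ℝ)) ^ (1/4:ℝ)) := by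
        gcongr ?_ * ?_
        · exact le_rfl
        · have h6 : (∫⁻ p, (‖u p‖₊ : ℝ≥0∞) ^ (6:ℝ)) ^ (1/12:ℝ)
              = ((∫⁻ p, (‖u p‖₊ : ℝ≥0∞) ^ (6:ℝ)) ^ (1/6:ℝ)) ^ (1/2:ℝ) := by
            rw [← ENNReal.rpow_mul]; norm_num
          rw [h6]
          calc ((∫⁻ p, (‖u p‖₊ : ℝ≥0∞) ^ (6:ℝ)) ^ (1/6:ℝ)) ^ (1/2:ℝ)
              ≤ ((C:ℝ≥0∞) * (∫⁻ p, (‖fderiv ℝ u p‖₊ : ℝ≥0∞) ^ (2:ℝ)) ^ (1/2:ℝ)) ^ (1/2:ℝ) :=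
                ENNReal.rpow_le_rpow (L6_bound u hu h2u) (by norm_num)
            _ = ((C:ℝ≥0∞)) ^ (1/2:ℝ) * (∫⁻ p, (‖fderiv ℝ u p‖₊ : ℝ≥0∞) ^ (2:ℝ)) ^ (1/4:ℝ) := by
                rw [ENNReal.mul_rpow_of_nonneg _ _ (by norm_num : (0:ℝ) ≤ 1/2),
                  ← ENNReal.rpow_mul]
                norm_num
    _ ≤ (1 + (C:ℝ≥0∞)) *
        ((∫⁻ p, (‖u p‖₊ : ℝ≥0∞) ^ (2:ℝ)) ^ (1/4:ℝ) *
         (∫⁻ p, (‖fderiv ℝ u p‖₊ : ℝ≥0∞) ^ (2:ℝ)) ^ (1/4:ℝ)) := by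
        rw [show (1 + (C:ℝ≥0∞)) * ((∫⁻ p, (‖u p‖₊ : ℝ≥0∞) ^ (2:ℝ)) ^ (1/4:ℝ) *
          (∫⁻ p, (‖fderiv ℝ u p‖₊ : ℝ≥0∞) ^ (2:ℝ)) ^ (1/4:ℝ))
          = (∫⁻ p, (‖u p‖₊ : ℝ≥0∞) ^ (2:ℝ)) ^ (1/4:ℝ) *
            ((1 + (C:ℝ≥0∞)) * (∫⁻ p, (‖fderiv ℝ u p‖₊ : ℝ≥0∞) ^ (2:ℝ)) ^ (1/4:ℝ)) by ring]
        gcongr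
        exact sqrt_coe_le

lemma lint_iteratedFDeriv_le {m k : ℕ} (hkm : k ≤ m) (u : Pt → F)
    (hu : ContDiff ℝ (m:ℕ∞) u) (h2u : HasCompactSupport u) :
    ∫⁻ p, (‖iteratedFDeriv ℝ k u p‖₊ : ℝ≥0∞) ^ (2:ℝ) ≤ ENNReal.ofReal (HSobSq m u) := by
  rw [lint_sq_eq _ (hu.continuous_iteratedFDeriv (by exact_mod_cast hkm))
    (h2u.iteratedFDeriv k)]
  apply ENNReal.ofReal_le_ofReal
  unfold HSobSq
  exact Finset.single_le_sum
    (f := fun n => ∫ p : Pt, ‖iteratedFDeriv ℝ n u p‖ ^ 2)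
    (fun i _ => integral_nonneg fun p => by positivity)
    (Finset.mem_range.2 (by omega))

end sobolev

section gfacts
variable {v : Pt → ℝ × ℝ}

def eA : (Pt →L[ℝ] (ℝ × ℝ)) →L[ℝ] (ℝ × ℝ) := ContinuousLinearMap.apply ℝ (ℝ × ℝ) ez

lemma norm_eA_le : ‖(eA : (Pt →L[ℝ] (ℝ × ℝ)) →L[ℝ] (ℝ × ℝ))‖ ≤ 1 := by
  apply ContinuousLinearMap.opNorm_le_bound _ zero_le_one
  intro L
  have := L.le_opNorm ez
  simpa [eA, norm_ez] using this

lemma g_eq : (fun p => fderiv ℝ v p ez) = fun p => eA (fderiv ℝ v p) := rfl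

lemma g_contDiff (hv : ContDiff ℝ 2 v) : ContDiff ℝ 1 (fun p => fderiv ℝ v p ez) := by
  rw [g_eq]
  exact eA.contDiff.comp (hv.fderiv_right (by norm_num))

lemma g_supp (h2v : HasCompactSupport v) : HasCompactSupport (fun p => fderiv ℝ v p ez) :=
  h2v.fderiv_apply ℝ ez

lemma g_norm_le (p : Pt) : ‖fderiv ℝ v p ez‖ ≤ ‖iteratedFDeriv ℝ 1 v p‖ := by
  have h1 : ‖fderiv ℝ v p ez‖ ≤ ‖fderiv ℝ v p‖ := by
    have := (fderiv ℝ v p).le_opNorm ez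
    simpa [norm_ez] using this
  have h2 : ‖iteratedFDeriv ℝ 1 v p‖ = ‖fderiv ℝ v p‖ := by
    rw [← norm_iteratedFDeriv_fderiv (n := 0), norm_iteratedFDeriv_zero]
  rw [h2]; exact h1

lemma g_fderiv_norm_le (hv : ContDiff ℝ 2 v) (p : Pt) :
    ‖fderiv ℝ (fun q => fderiv ℝ v q ez) p‖ ≤ ‖iteratedFDeriv ℝ 2 v p‖ := by
  have hdv : ContDiff ℝ 1 (fderiv ℝ v) := hv.fderiv_right (by norm_num)
  have hder : fderiv ℝ (fun q => fderiv ℝ v q ez) p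
      = eA.comp (fderiv ℝ (fderiv ℝ v) p) := by
    rw [g_eq]
    have : (fun p => eA (fderiv ℝ v p)) = eA ∘ fderiv ℝ v := rfl
    rw [this, fderiv_comp p eA.differentiableAt (hdv.differentiable one_ne_zero p)]
    simp [eA]
  rw [hder]
  calc ‖eA.comp (fderiv ℝ (fderiv ℝ v) p)‖ ≤ ‖(eA : _)‖ * ‖fderiv ℝ (fderiv ℝ v) p‖ :=
        ContinuousLinearMap.opNorm_comp_le _ _
    _ ≤ 1 * ‖fderiv ℝ (fderiv ℝ v) p‖ := by gcongr; exact norm_eA_le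
    _ = ‖fderiv ℝ (fderiv ℝ v) p‖ := one_mul _
    _ = ‖iteratedFDeriv ℝ 2 v p‖ := by
        rw [← norm_iteratedFDeriv_fderiv (n := 1)]
        rw [← norm_iteratedFDeriv_fderiv (n := 0), norm_iteratedFDeriv_zero]

end gfacts

lemma integrand_bound (W : ℝ) (a b : ℝ × ℝ) :
    |W * inner2 a b| ≤ 2 * |W| * ‖a‖ * ‖b‖ := by
  have h1 : |a.1 * b.1 + a.2 * b.2| ≤ 2 * (‖a‖ * ‖b‖) := by
    calc |a.1 * b.1 + a.2 * b.2| ≤ |a.1 * b.1| + |a.2 * b.2| := abs_add_le _ _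
      _ = |a.1| * |b.1| + |a.2| * |b.2| := by rw [abs_mul, abs_mul]
      _ ≤ ‖a‖ * ‖b‖ + ‖a‖ * ‖b‖ := by
          gcongr
          · exact norm_fst_le a
          · exact norm_fst_le b
          · exact norm_snd_le a
          · exact norm_snd_le b
      _ = 2 * (‖a‖ * ‖b‖) := by ring
  calc |W * inner2 a b| = |W| * |a.1 * b.1 + a.2 * b.2| := by rw [inner2, abs_mul]
    _ ≤ |W| * (2 * (‖a‖ * ‖b‖)) := by gcongr
    _ = 2 * |W| * ‖a‖ * ‖b‖ := by ring

lemma sqrt_le_half_add {x y : ℝ} (hx : 0 ≤ x) (hy : 0 ≤ y) :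
    (x * y) ^ (1/2:ℝ) ≤ (x + y) / 2 := by
  rw [← Real.sqrt_eq_rpow]
  have h : Real.sqrt (x*y) ≤ Real.sqrt (((x+y)/2)^2) := by
    apply Real.sqrt_le_sqrt; nlinarith [sq_nonneg (x - y)]
  simpa [Real.sqrt_sq (by positivity : (0:ℝ) ≤ (x+y)/2)] using h

lemma sqrt_le_half_one_add {t : ℝ} (ht : 0 ≤ t) : t ^ (1/2:ℝ) ≤ (1 + t) / 2 := by
  have := sqrt_le_half_add (zero_le_one) ht
  simpa using this

lemma young4 {K ξ a b c d e f : ℝ} (hK : 0 ≤ K) (hξ : 0 < ξ)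
    (ha : 0 ≤ a) (hb : 0 ≤ b) (hc : 0 ≤ c) (hd : 0 ≤ d) (he : 0 ≤ e) (hf : 0 ≤ f) :
    K * (a ^ (1/4:ℝ) * b ^ (1/4:ℝ) * c ^ (1/4:ℝ) * d ^ (1/4:ℝ) * e ^ (1/4:ℝ) * f ^ (1/4:ℝ)) ≤
      max 1 (K^2/ξ) * (1 + e*f) * (a+c) + ξ * (b+d) := by
  set u : ℝ := (a*c*e*f) ^ (1/4:ℝ) with hu
  set w : ℝ := (b*d) ^ (1/4:ℝ) with hw
  have hu0 : 0 ≤ u := by positivity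
  have hw0 : 0 ≤ w := by positivity
  have hsplit : a ^ (1/4:ℝ) * b ^ (1/4:ℝ) * c ^ (1/4:ℝ) * d ^ (1/4:ℝ) * e ^ (1/4:ℝ) * f ^ (1/4:ℝ)
      = u * w := by
    rw [hu, hw, Real.mul_rpow (by positivity) hf, Real.mul_rpow (by positivity) he,
      Real.mul_rpow ha hc, Real.mul_rpow hb hd]
    ring
  have hu2 : u^2 = (a*c)^(1/2:ℝ) * (e*f)^(1/2:ℝ) := by
    rw [hu, ← Real.rpow_natCast ((a*c*e*f) ^ (1/4:ℝ)) 2, ← Real.rpow_mul (by positivity),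
      show (1/4:ℝ) * (2:ℕ) = 1/2 by norm_num,
      show a*c*e*f = (a*c)*(e*f) by ring,
      Real.mul_rpow (by positivity) (by positivity)]
  have hw2 : w^2 = (b*d)^(1/2:ℝ) := by
    rw [hw, ← Real.rpow_natCast ((b*d) ^ (1/4:ℝ)) 2, ← Real.rpow_mul (by positivity)]
    norm_num
  have hu2le : u^2 ≤ (a+c)/2 * ((1+e*f)/2) := by
    rw [hu2]
    have h1 := sqrt_le_half_add ha hc
    have h2' : (e*f)^(1/2:ℝ) ≤ (1+e*f)/2 := sqrt_le_half_one_add (by positivity)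
    exact mul_le_mul h1 h2' (by positivity) (by positivity)
  have hw2le : w^2 ≤ (b+d)/2 := by rw [hw2]; exact sqrt_le_half_add hb hd
  have hyoung : K * (u * w) ≤ K^2/(4*ξ) * u^2 + ξ * w^2 := by
    have key : 4*ξ*(K*(u*w)) ≤ K^2*u^2 + 4*ξ^2*w^2 := by nlinarith [sq_nonneg (K*u - 2*ξ*w)]
    have h4 : (0:ℝ) < 4*ξ := by linarith
    rw [← mul_le_mul_iff_right₀ h4]
    calc 4*ξ*(K*(u*w)) ≤ K^2*u^2 + 4*ξ^2*w^2 := key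
      _ = 4*ξ*(K^2/(4*ξ) * u^2 + ξ*w^2) := by field_simp
  rw [hsplit]
  calc K * (u * w) ≤ K^2/(4*ξ) * u^2 + ξ * w^2 := hyoung
    _ ≤ K^2/(4*ξ) * ((a+c)/2 * ((1+e*f)/2)) + ξ * ((b+d)/2) := by
        gcongr
    _ ≤ max 1 (K^2/ξ) * (1 + e*f) * (a+c) + ξ * (b+d) := by
        have h1 : K^2/(4*ξ) * ((a+c)/2 * ((1+e*f)/2)) ≤ max 1 (K^2/ξ) * (1 + e*f) * (a+c) := by
          have hA : K^2/(4*ξ) ≤ max 1 (K^2/ξ) := by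
            refine le_trans ?_ (le_max_right _ _)
            gcongr K^2 / ?_ <;> linarith
          calc K^2/(4*ξ) * ((a+c)/2 * ((1+e*f)/2))
              ≤ max 1 (K^2/ξ) * ((a+c) * (1+e*f)) := by
                have hX : (a+c)/2 * ((1+e*f)/2) ≤ (a+c) * (1+e*f) := by nlinarith
                exact mul_le_mul hA hX (by positivity) (le_trans zero_le_one (le_max_left _ _))
            _ = max 1 (K^2/ξ) * (1 + e*f) * (a+c) := by ring
        have h2 : ξ * ((b+d)/2) ≤ ξ * (b+d) := by nlinarith
        linarith

lemma norm_fderiv_eq_iter {F : Type*} [NormedAddCommGroup F] [NormedSpace ℝ F]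
    (u : Pt → F) (p : Pt) : ‖fderiv ℝ u p‖ = ‖iteratedFDeriv ℝ 1 u p‖ := by
  have h := norm_iteratedFDeriv_fderiv (𝕜 := ℝ) (n := 0) (f := u) (x := p)
  rw [norm_iteratedFDeriv_zero] at h
  simpa using h

set_option maxHeartbeats 1000000 in
/-- For any `ξ > 0` there is `C_ξ > 0` such that for all `V ∈ H¹(S, ℝ²)`, `v ∈ H²(S, ℝ²)`
and `W ∈ H¹(S, ℝ)`:
`|(W V, ∂_z v)_{L²}| ≤ C_ξ (1 + ‖v‖²_{H¹} ‖v‖²_{H²})(‖V‖²_{L²} + ‖W‖²_{L²})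
  + ξ (‖V‖²_{H¹} + ‖W‖²_{H¹})`. -/
theorem interpolation_trilinear_estimate :
    ∀ ξ : ℝ, 0 < ξ → ∃ C : ℝ, 0 < C ∧
      ∀ (V : Pt → ℝ × ℝ) (v : Pt → ℝ × ℝ) (W : Pt → ℝ),
        ContDiff ℝ 1 V → HasCompactSupport V →
        ContDiff ℝ 2 v → HasCompactSupport v →
        ContDiff ℝ 1 W → HasCompactSupport W →
        |∫ p : Pt, W p * inner2 (V p) (fderiv ℝ v p ez)| ≤
          C * (1 + HSobSq 1 v * HSobSq 2 v) * (L2sq V + L2sq W)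
            + ξ * (HSobSq 1 V + HSobSq 1 W) := by
  intro ξ hξ
  set CV : ℝ≥0 := SNormLESNormFDerivOfEqConst (ℝ × ℝ) (volume : Measure Pt) 2 with hCVdef
  set CW : ℝ≥0 := SNormLESNormFDerivOfEqConst ℝ (volume : Measure Pt) 2 with hCWdef
  set K : ℝ := 2 * (1 + (CW:ℝ)) * (1 + (CV:ℝ)) * (1 + (CV:ℝ)) with hKdef
  have hK0 : 0 ≤ K := by positivity
  refine ⟨max 1 (K^2/ξ), lt_of_lt_of_le one_pos (le_max_left _ _), ?_⟩
  intro V v W hV h2V hv h2v hW h2W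
  set g : Pt → ℝ × ℝ := fun p => fderiv ℝ v p ez with hgdef
  have hgC : ContDiff ℝ 1 g := by rw [hgdef]; exact g_contDiff hv
  have hgS : HasCompactSupport g := by rw [hgdef]; exact g_supp h2v
  -- nonnegativity of the real quantities
  have hra : 0 ≤ L2sq V := integral_nonneg fun p => by positivity
  have hrc : 0 ≤ L2sq W := integral_nonneg fun p => by positivity
  have hrb : 0 ≤ HSobSq 1 V := Finset.sum_nonneg fun n _ => integral_nonneg fun p => by positivity
  have hrd : 0 ≤ HSobSq 1 W := Finset.sum_nonneg fun n _ => integral_nonneg fun p => by positivity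
  have hre : 0 ≤ HSobSq 1 v := Finset.sum_nonneg fun n _ => integral_nonneg fun p => by positivity
  have hrf : 0 ≤ HSobSq 2 v := Finset.sum_nonneg fun n _ => integral_nonneg fun p => by positivity
  -- measurability
  have mW : AEMeasurable (fun p : Pt => (‖W p‖₊ : ℝ≥0∞)) volume :=
    (ENNReal.continuous_coe.comp hW.continuous.nnnorm).measurable.aemeasurable
  have mV : AEMeasurable (fun p : Pt => (‖V p‖₊ : ℝ≥0∞)) volume :=
    (ENNReal.continuous_coe.comp hV.continuous.nnnorm).measurable.aemeasurable
  have mg : AEMeasurable (fun p : Pt => (‖g p‖₊ : ℝ≥0∞)) volume :=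
    (ENNReal.continuous_coe.comp hgC.continuous.nnnorm).measurable.aemeasurable
  -- identification / bounds for the six basic quantities
  have hIV : ∫⁻ p, (‖V p‖₊ : ℝ≥0∞) ^ (2:ℝ) = ENNReal.ofReal (L2sq V) :=
    lint_sq_eq V hV.continuous h2V
  have hIW : ∫⁻ p, (‖W p‖₊ : ℝ≥0∞) ^ (2:ℝ) = ENNReal.ofReal (L2sq W) :=
    lint_sq_eq W hW.continuous h2W
  have hIV' : ∫⁻ p, (‖fderiv ℝ V p‖₊ : ℝ≥0∞) ^ (2:ℝ) ≤ ENNReal.ofReal (HSobSq 1 V) := by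
    calc ∫⁻ p, (‖fderiv ℝ V p‖₊ : ℝ≥0∞) ^ (2:ℝ)
        = ∫⁻ p, (‖iteratedFDeriv ℝ 1 V p‖₊ : ℝ≥0∞) ^ (2:ℝ) :=
          lintegral_congr fun p => by rw [coe_nnnorm_eq (norm_fderiv_eq_iter V p)]
      _ ≤ ENNReal.ofReal (HSobSq 1 V) := lint_iteratedFDeriv_le (le_refl 1) V hV h2V
  have hIW' : ∫⁻ p, (‖fderiv ℝ W p‖₊ : ℝ≥0∞) ^ (2:ℝ) ≤ ENNReal.ofReal (HSobSq 1 W) := by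
    calc ∫⁻ p, (‖fderiv ℝ W p‖₊ : ℝ≥0∞) ^ (2:ℝ)
        = ∫⁻ p, (‖iteratedFDeriv ℝ 1 W p‖₊ : ℝ≥0∞) ^ (2:ℝ) :=
          lintegral_congr fun p => by rw [coe_nnnorm_eq (norm_fderiv_eq_iter W p)]
      _ ≤ ENNReal.ofReal (HSobSq 1 W) := lint_iteratedFDeriv_le (le_refl 1) W hW h2W
  have hIg : ∫⁻ p, (‖g p‖₊ : ℝ≥0∞) ^ (2:ℝ) ≤ ENNReal.ofReal (HSobSq 1 v) := by
    calc ∫⁻ p, (‖g p‖₊ : ℝ≥0∞) ^ (2:ℝ)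
        ≤ ∫⁻ p, (‖iteratedFDeriv ℝ 1 v p‖₊ : ℝ≥0∞) ^ (2:ℝ) := by
          apply lintegral_mono; intro p
          apply ENNReal.rpow_le_rpow _ (by norm_num)
          rw [← ofReal_norm_eq_coe_nnnorm, ← ofReal_norm_eq_coe_nnnorm]
          apply ENNReal.ofReal_le_ofReal
          rw [hgdef]
          exact g_norm_le p
      _ ≤ ENNReal.ofReal (HSobSq 1 v) :=
          lint_iteratedFDeriv_le (le_refl 1) v (hv.of_le (by norm_num)) h2v
  have hIg' : ∫⁻ p, (‖fderiv ℝ g p‖₊ : ℝ≥0∞) ^ (2:ℝ) ≤ ENNReal.ofReal (HSobSq 2 v) := by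
    calc ∫⁻ p, (‖fderiv ℝ g p‖₊ : ℝ≥0∞) ^ (2:ℝ)
        ≤ ∫⁻ p, (‖iteratedFDeriv ℝ 2 v p‖₊ : ℝ≥0∞) ^ (2:ℝ) := by
          apply lintegral_mono; intro p
          apply ENNReal.rpow_le_rpow _ (by norm_num)
          rw [← ofReal_norm_eq_coe_nnnorm, ← ofReal_norm_eq_coe_nnnorm]
          apply ENNReal.ofReal_le_ofReal
          rw [hgdef]
          exact g_fderiv_norm_le hv p
      _ ≤ ENNReal.ofReal (HSobSq 2 v) := lint_iteratedFDeriv_le (le_refl 2) v hv h2v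
  -- the main chain of inequalities, in `ℝ≥0∞`
  have hofK : ENNReal.ofReal K = 2 * (1 + (CW:ℝ≥0∞)) * (1 + (CV:ℝ≥0∞)) * (1 + (CV:ℝ≥0∞)) := by
    rw [hKdef, ENNReal.ofReal_mul (by positivity), ENNReal.ofReal_mul (by positivity),
      ENNReal.ofReal_mul (by norm_num),
      ENNReal.ofReal_add zero_le_one CW.coe_nonneg,
      ENNReal.ofReal_add zero_le_one CV.coe_nonneg]
    simp
  have main : ENNReal.ofReal |∫ p : Pt, W p * inner2 (V p) (g p)| ≤
      ENNReal.ofReal (K * ((L2sq V) ^ (1/4:ℝ) * (HSobSq 1 V) ^ (1/4:ℝ) * (L2sq W) ^ (1/4:ℝ) *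
        (HSobSq 1 W) ^ (1/4:ℝ) * (HSobSq 1 v) ^ (1/4:ℝ) * (HSobSq 2 v) ^ (1/4:ℝ))) := by
    calc ENNReal.ofReal |∫ p : Pt, W p * inner2 (V p) (g p)|
        = (‖∫ p : Pt, W p * inner2 (V p) (g p)‖₊ : ℝ≥0∞) := by
          rw [← Real.norm_eq_abs, ofReal_norm_eq_coe_nnnorm]
      _ ≤ ∫⁻ p, (‖W p * inner2 (V p) (g p)‖₊ : ℝ≥0∞) :=
          enorm_integral_le_lintegral_enorm _
      _ ≤ ∫⁻ p, 2 * ((‖W p‖₊ : ℝ≥0∞) * (‖V p‖₊ : ℝ≥0∞) * (‖g p‖₊ : ℝ≥0∞)) := by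
          apply lintegral_mono; intro p
          show (‖W p * inner2 (V p) (g p)‖₊ : ℝ≥0∞) ≤
            2 * ((‖W p‖₊ : ℝ≥0∞) * (‖V p‖₊ : ℝ≥0∞) * (‖g p‖₊ : ℝ≥0∞))
          rw [← ofReal_norm_eq_coe_nnnorm]
          calc ENNReal.ofReal ‖W p * inner2 (V p) (g p)‖
              ≤ ENNReal.ofReal (2 * |W p| * ‖V p‖ * ‖g p‖) := by
                apply ENNReal.ofReal_le_ofReal
                rw [Real.norm_eq_abs]
                exact integrand_bound (W p) (V p) (g p)
            _ = 2 * ((‖W p‖₊ : ℝ≥0∞) * (‖V p‖₊ : ℝ≥0∞) * (‖g p‖₊ : ℝ≥0∞)) := by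
                rw [ENNReal.ofReal_mul (by positivity), ENNReal.ofReal_mul (by positivity),
                  ENNReal.ofReal_mul (by norm_num),
                  show |W p| = ‖W p‖ from (Real.norm_eq_abs _).symm,
                  ofReal_norm_eq_coe_nnnorm, ofReal_norm_eq_coe_nnnorm,
                  ofReal_norm_eq_coe_nnnorm]
                rw [show ENNReal.ofReal (2:ℝ) = 2 by norm_num]
                ring
      _ = 2 * ∫⁻ p, (‖W p‖₊ : ℝ≥0∞) * (‖V p‖₊ : ℝ≥0∞) * (‖g p‖₊ : ℝ≥0∞) :=
          lintegral_const_mul' 2 _ (by norm_num)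
      _ ≤ 2 * ((∫⁻ p, (‖W p‖₊:ℝ≥0∞) ^ (3:ℝ)) ^ (1/3:ℝ) *
            (∫⁻ p, (‖V p‖₊:ℝ≥0∞) ^ (3:ℝ)) ^ (1/3:ℝ) *
            (∫⁻ p, (‖g p‖₊:ℝ≥0∞) ^ (3:ℝ)) ^ (1/3:ℝ)) := by
          gcongr
          exact holder3 _ _ _ mW mV mg
      _ ≤ 2 * (((1 + (CW:ℝ≥0∞)) * ((∫⁻ p, (‖W p‖₊:ℝ≥0∞)^(2:ℝ))^(1/4:ℝ) *
              (∫⁻ p, (‖fderiv ℝ W p‖₊:ℝ≥0∞)^(2:ℝ))^(1/4:ℝ))) *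
            ((1 + (CV:ℝ≥0∞)) * ((∫⁻ p, (‖V p‖₊:ℝ≥0∞)^(2:ℝ))^(1/4:ℝ) *
              (∫⁻ p, (‖fderiv ℝ V p‖₊:ℝ≥0∞)^(2:ℝ))^(1/4:ℝ))) *
            ((1 + (CV:ℝ≥0∞)) * ((∫⁻ p, (‖g p‖₊:ℝ≥0∞)^(2:ℝ))^(1/4:ℝ) *
              (∫⁻ p, (‖fderiv ℝ g p‖₊:ℝ≥0∞)^(2:ℝ))^(1/4:ℝ)))) := by
          gcongr
          · exact L3_bound W hW h2W
          · exact L3_bound V hV h2V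
          · exact L3_bound g hgC hgS
      _ ≤ 2 * (((1 + (CW:ℝ≥0∞)) * ((ENNReal.ofReal (L2sq W))^(1/4:ℝ) *
              (ENNReal.ofReal (HSobSq 1 W))^(1/4:ℝ))) *
            ((1 + (CV:ℝ≥0∞)) * ((ENNReal.ofReal (L2sq V))^(1/4:ℝ) *
              (ENNReal.ofReal (HSobSq 1 V))^(1/4:ℝ))) *
            ((1 + (CV:ℝ≥0∞)) * ((ENNReal.ofReal (HSobSq 1 v))^(1/4:ℝ) *
              (ENNReal.ofReal (HSobSq 2 v))^(1/4:ℝ)))) := by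
          rw [hIW, hIV]
          gcongr
      _ = ENNReal.ofReal (K * ((L2sq V) ^ (1/4:ℝ) * (HSobSq 1 V) ^ (1/4:ℝ) * (L2sq W) ^ (1/4:ℝ) *
            (HSobSq 1 W) ^ (1/4:ℝ) * (HSobSq 1 v) ^ (1/4:ℝ) * (HSobSq 2 v) ^ (1/4:ℝ))) := by
          rw [ENNReal.ofReal_mul hK0,
            ENNReal.ofReal_mul (show (0:ℝ) ≤ (L2sq V) ^ (1/4:ℝ) * (HSobSq 1 V) ^ (1/4:ℝ) *
              (L2sq W) ^ (1/4:ℝ) * (HSobSq 1 W) ^ (1/4:ℝ) * (HSobSq 1 v) ^ (1/4:ℝ) by positivity),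
            ENNReal.ofReal_mul (show (0:ℝ) ≤ (L2sq V) ^ (1/4:ℝ) * (HSobSq 1 V) ^ (1/4:ℝ) *
              (L2sq W) ^ (1/4:ℝ) * (HSobSq 1 W) ^ (1/4:ℝ) by positivity),
            ENNReal.ofReal_mul (show (0:ℝ) ≤ (L2sq V) ^ (1/4:ℝ) * (HSobSq 1 V) ^ (1/4:ℝ) *
              (L2sq W) ^ (1/4:ℝ) by positivity),
            ENNReal.ofReal_mul (show (0:ℝ) ≤ (L2sq V) ^ (1/4:ℝ) * (HSobSq 1 V) ^ (1/4:ℝ) by positivity),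
            ENNReal.ofReal_mul (show (0:ℝ) ≤ (L2sq V) ^ (1/4:ℝ) by positivity),
            ← ENNReal.ofReal_rpow_of_nonneg hra (by norm_num),
            ← ENNReal.ofReal_rpow_of_nonneg hrb (by norm_num),
            ← ENNReal.ofReal_rpow_of_nonneg hrc (by norm_num),
            ← ENNReal.ofReal_rpow_of_nonneg hrd (by norm_num),
            ← ENNReal.ofReal_rpow_of_nonneg hre (by norm_num),
            ← ENNReal.ofReal_rpow_of_nonneg hrf (by norm_num),
            hofK]
          ring
  have hyoung := young4 (K := K) (ξ := ξ) hK0 hξ hra hrb hrc hrd hre hrf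
  have hRHSnn : 0 ≤ max 1 (K ^ 2 / ξ) * (1 + HSobSq 1 v * HSobSq 2 v) * (L2sq V + L2sq W)
      + ξ * (HSobSq 1 V + HSobSq 1 W) := by
    have h1 : (0:ℝ) ≤ max 1 (K^2/ξ) := le_trans zero_le_one (le_max_left _ _)
    have h2 : (0:ℝ) ≤ 1 + HSobSq 1 v * HSobSq 2 v := by nlinarith [mul_nonneg hre hrf]
    have h3 : (0:ℝ) ≤ L2sq V + L2sq W := by linarith
    nlinarith [mul_nonneg (mul_nonneg h1 h2) h3, mul_nonneg hξ.le (add_nonneg hrb hrd)]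
  have final : |∫ p : Pt, W p * inner2 (V p) (g p)| ≤
      max 1 (K ^ 2 / ξ) * (1 + HSobSq 1 v * HSobSq 2 v) * (L2sq V + L2sq W)
        + ξ * (HSobSq 1 V + HSobSq 1 W) := by
    have h := main.trans (ENNReal.ofReal_le_ofReal hyoung)
    exact (ENNReal.ofReal_le_ofReal_iff hRHSnn).mp h
  simpa [hgdef] using final
end
end
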